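/- Effective dimension is not increased by calming (linear case). Let A be a q×p matrix, G² (p×p) and Γ² (q×q) symmetric positive definite, σ > 0 and λ = σ⁻². Let 𝔍_G be the symmetric block matrix with ff-block G² + λAᵀA, gg-block Γ² + (σ⁻²+λ)I_q and off-diagonal blocks −λAᵀ, −λA, and let 𝔍 be the same matrix with G² and Γ² replaced by zero. Then tr(𝔍_G⁻¹𝔍) ≤ 2·tr((G² + σ⁻²AᵀA)⁻¹ σ⁻²AᵀA) + 2·tr(((σ⁻²+λ)⁻¹Γ² + I_q)⁻¹). -/

import Mathlib

open MeasureTheory Matrix Real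

noncomputable section

namespace Calming

/-- Euclidean norm of a finitely indexed real vector. -/
def enorm {n : Type*} [Fintype n] (v : n → ℝ) : ℝ := Real.sqrt (∑ i, (v i) ^ 2)

/-- Operator (spectral) norm of a square real matrix. -/
def opNorm {n : Type*} [Fintype n] [DecidableEq n] (B : Matrix n n ℝ) : ℝ :=
  ‖Matrix.toEuclideanCLM (𝕜 := ℝ) B‖

/-- The quantile function `z(B,x) = √(tr B) + √(2‖B‖x)`. -/
def zq {n : Type*} [Fintype n] [DecidableEq n] (B : Matrix n n ℝ) (x : ℝ) : ℝ :=
  Real.sqrt B.trace + Real.sqrt (2 * opNorm B * x)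

open Classical in
/-- Positive semidefinite square root of a matrix (junk value `0` otherwise). -/
def matSqrt {n : Type*} [Fintype n] [DecidableEq n] (B : Matrix n n ℝ) : Matrix n n ℝ :=
  if h : B.PosSemidef then h.1.eigenvectorUnitary.1 * diagonal (Real.sqrt ∘ h.1.eigenvalues) *
    (star h.1.eigenvectorUnitary : Matrix n n ℝ) else 0

/-- Loewner (positive semidefinite) order: `B ≤ C`. -/
def loewnerLE {n : Type*} [Fintype n] (B C : Matrix n n ℝ) : Prop := (C - B).PosSemidef

/-- `D` is the positive semidefinite square root of `B`. -/
def IsSqrtOf {n : Type*} [Fintype n] (D B : Matrix n n ℝ) : Prop :=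
  D.PosSemidef ∧ D * D = B

/-- `Δ(B, B̆) = ‖B^{-1/2} B̆ B^{-1/2} - I‖`. -/
def DeltaM {n : Type*} [Fintype n] [DecidableEq n] (B C : Matrix n n ℝ) : ℝ :=
  opNorm (matSqrt B⁻¹ * C * matSqrt B⁻¹ - 1)

/-- Centered Gaussian measure with covariance `S` (defined through its density). -/
def gaussianCov {n : Type*} [Fintype n] [DecidableEq n] (S : Matrix n n ℝ) :
    Measure (n → ℝ) :=
  (∫⁻ x, ENNReal.ofReal (Real.exp (-(x ⬝ᵥ S⁻¹.mulVec x) / 2)))⁻¹ •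
    (volume.withDensity fun x => ENNReal.ofReal (Real.exp (-(x ⬝ᵥ S⁻¹.mulVec x) / 2)))

/-- Measure with density proportional to `exp (L υ) · 1_S(υ)`. -/
def posterior {V : Type*} [MeasureSpace V] (L : V → ℝ) (S : Set V) : Measure V :=
  (∫⁻ x, S.indicator (fun y => ENNReal.ofReal (Real.exp (L y))) x)⁻¹ •
    volume.withDensity (S.indicator fun y => ENNReal.ofReal (Real.exp (L y)))

variable {p q : ℕ}

/-- `f`-component of the total parameter. -/
def fpart (υ : (Fin p ⊕ Fin q) → ℝ) : Fin p → ℝ := fun i => υ (Sum.inl i)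

/-- `g`-component of the total parameter. -/
def gpart (υ : (Fin p ⊕ Fin q) → ℝ) : Fin q → ℝ := fun j => υ (Sum.inr j)

/-- The penalized log-likelihood of the calming approach. -/
def LG (A : (Fin p → ℝ) → (Fin q → ℝ)) (Y : Fin q → ℝ) (σ lam : ℝ)
    (G : Matrix (Fin p) (Fin p) ℝ) (Γm : Matrix (Fin q) (Fin q) ℝ)
    (f0 : Fin p → ℝ) (g0 : Fin q → ℝ) (υ : (Fin p ⊕ Fin q) → ℝ) : ℝ :=
  -(enorm (Y - gpart υ) ^ 2) / (2 * σ ^ 2) - lam / 2 * enorm (gpart υ - A (fpart υ)) ^ 2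
    - enorm (G.mulVec (fpart υ - f0)) ^ 2 / 2 - enorm (Γm.mulVec (gpart υ - g0)) ^ 2 / 2

/-- `m`-th directional (Gateaux) derivative of the structural penalty `‖g - A(f)‖²`. -/
def sDeriv (A : (Fin p → ℝ) → (Fin q → ℝ)) (m : ℕ) (υ u : (Fin p ⊕ Fin q) → ℝ) : ℝ :=
  iteratedDeriv m (fun t : ℝ => enorm (gpart (υ + t • u) - A (fpart (υ + t • u))) ^ 2) 0

/-- `δ_{3,G}(r)`. -/
def delta3G (A : (Fin p → ℝ) → (Fin q → ℝ))
    (DG : Matrix (Fin p ⊕ Fin q) (Fin p ⊕ Fin q) ℝ) (υG : (Fin p ⊕ Fin q) → ℝ) (r : ℝ) : ℝ :=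
  sSup {v | ∃ υ u, enorm (DG.mulVec (υ - υG)) ≤ r ∧ enorm (DG.mulVec u) ≤ r ∧
    v = |sDeriv A 3 υ u|}

/-- `δ_m(r₀)`, `m = 3,4`, where `Dm υ = 𝔍(υ)^{1/2}`. -/
def deltam (A : (Fin p → ℝ) → (Fin q → ℝ))
    (Dm : ((Fin p ⊕ Fin q) → ℝ) → Matrix (Fin p ⊕ Fin q) (Fin p ⊕ Fin q) ℝ)
    (Υ : Set ((Fin p ⊕ Fin q) → ℝ)) (m : ℕ) (r : ℝ) : ℝ :=
  sSup {v | ∃ υ ∈ Υ, ∃ u, enorm ((Dm υ).mulVec u) ≤ r ∧ v = |sDeriv A m υ u|}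

/-- `J` is the (directional) negative Hessian of `F`. -/
def IsDirectionalHessian (F : ((Fin p ⊕ Fin q) → ℝ) → ℝ)
    (J : ((Fin p ⊕ Fin q) → ℝ) → Matrix (Fin p ⊕ Fin q) (Fin p ⊕ Fin q) ℝ) : Prop :=
  ∀ υ u, iteratedDeriv 2 (fun t : ℝ => F (υ + t • u)) 0 = -(u ⬝ᵥ (J υ).mulVec u)

/-- The ratio `ρ(r₀)` of posterior-type masses outside/inside the local ellipsoid. -/
def rhoVal (L : ((Fin p ⊕ Fin q) → ℝ) → ℝ) (υt : (Fin p ⊕ Fin q) → ℝ)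
    (Dt : Matrix (Fin p ⊕ Fin q) (Fin p ⊕ Fin q) ℝ) (r0 : ℝ) : ℝ :=
  ((∫⁻ u in {u | r0 < enorm (Dt.mulVec u)}, ENNReal.ofReal (Real.exp (L (υt + u)))) /
    (∫⁻ u in {u | enorm (Dt.mulVec u) ≤ r0}, ENNReal.ofReal (Real.exp (L (υt + u))))).toReal

section AuxLemmas

variable {n' m' : Type*} [Fintype n'] [DecidableEq n'] [Fintype m'] [DecidableEq m']

lemma aux_trace_fromBlocks (A : Matrix n' n' ℝ) (B : Matrix n' m' ℝ)
    (C : Matrix m' n' ℝ) (D : Matrix m' m' ℝ) :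
    (Matrix.fromBlocks A B C D).trace = A.trace + D.trace := by
  simp [Matrix.trace, Fintype.sum_sum_type, Matrix.diag]

lemma aux_trace_nonneg {M : Matrix n' n' ℝ} (hM : M.PosSemidef) : 0 ≤ M.trace := by
  rw [Matrix.trace]
  refine Finset.sum_nonneg fun i _ => ?_
  have h := hM.dotProduct_mulVec_nonneg (Pi.single i 1)
  simpa [Matrix.mulVec_single, single_dotProduct, Matrix.diag] using h

open scoped MatrixOrder in
lemma aux_trace_mul_nonneg {M P : Matrix n' n' ℝ} (hM : M.PosSemidef) (hP : P.PosSemidef) :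
    0 ≤ (M * P).trace := by
  have hS : (CFC.sqrt P).PosSemidef := Matrix.nonneg_iff_posSemidef.mp (CFC.sqrt_nonneg P)
  have key : (M * P).trace = ((CFC.sqrt P)ᴴ * M * CFC.sqrt P).trace := by
    conv_lhs => rw [← CFC.sqrt_mul_sqrt_self P (Matrix.nonneg_iff_posSemidef.mpr hP)]
    rw [← Matrix.mul_assoc, Matrix.trace_mul_comm, ← Matrix.mul_assoc,
      hS.isHermitian.eq]
  rw [key]
  exact aux_trace_nonneg (hM.conjTranspose_mul_mul_same _)

lemma aux_smul_posSemidef {c : ℝ} (hc : 0 ≤ c) {M : Matrix n' n' ℝ} (hM : M.PosSemidef) :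
    (c • M).PosSemidef := by
  refine Matrix.PosSemidef.of_dotProduct_mulVec_nonneg ?_ fun x => ?_
  · show (c • M)ᴴ = c • M
    rw [Matrix.conjTranspose_smul, star_trivial, hM.1.eq]
  · rw [Matrix.smul_mulVec, dotProduct_smul, smul_eq_mul]
    exact mul_nonneg hc (hM.dotProduct_mulVec_nonneg x)

lemma aux_dot_split (A : Matrix n' n' ℝ) (D : Matrix m' m' ℝ) (x : n' ⊕ m' → ℝ) :
    star x ⬝ᵥ Sum.elim (A *ᵥ (x ∘ Sum.inl)) (D *ᵥ (x ∘ Sum.inr)) =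
      star (x ∘ Sum.inl) ⬝ᵥ (A *ᵥ (x ∘ Sum.inl)) +
        star (x ∘ Sum.inr) ⬝ᵥ (D *ᵥ (x ∘ Sum.inr)) := by
  simp [dotProduct, Fintype.sum_sum_type, Function.comp]

lemma aux_fromBlocks_posSemidef {A : Matrix n' n' ℝ} {D : Matrix m' m' ℝ}
    (hA : A.PosSemidef) (hD : D.PosSemidef) :
    (Matrix.fromBlocks A 0 0 D).PosSemidef := by
  refine Matrix.PosSemidef.of_dotProduct_mulVec_nonneg
    (Matrix.IsHermitian.fromBlocks hA.1 (by simp) hD.1) fun x => ?_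
  rw [Matrix.fromBlocks_mulVec]
  simp only [Matrix.zero_mulVec, add_zero, zero_add]
  rw [aux_dot_split]
  exact add_nonneg (hA.dotProduct_mulVec_nonneg _) (hD.dotProduct_mulVec_nonneg _)

lemma aux_fromBlocks_posDef {A : Matrix n' n' ℝ} {D : Matrix m' m' ℝ}
    (hA : A.PosDef) (hD : D.PosDef) :
    (Matrix.fromBlocks A 0 0 D).PosDef := by
  refine Matrix.PosDef.of_dotProduct_mulVec_pos
    (Matrix.IsHermitian.fromBlocks hA.1 (by simp) hD.1) fun x hx => ?_
  rw [Matrix.fromBlocks_mulVec]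
  simp only [Matrix.zero_mulVec, add_zero, zero_add]
  rw [aux_dot_split]
  by_cases h1 : x ∘ Sum.inl = 0
  · have h2 : x ∘ Sum.inr ≠ 0 := by
      intro h2
      apply hx
      funext i
      cases i with
      | inl i => exact congrFun h1 i
      | inr i => exact congrFun h2 i
    have hpos := hD.dotProduct_mulVec_pos h2
    have hnn := hA.posSemidef.dotProduct_mulVec_nonneg (x ∘ Sum.inl)
    linarith
  · have hpos := hA.dotProduct_mulVec_pos h1
    have hnn := hD.posSemidef.dotProduct_mulVec_nonneg (x ∘ Sum.inr)
    linarith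

end AuxLemmas

/-- effective dimension is not increased by calming (linear case). -/
theorem effective_dimension_calming {p q : ℕ} (Am : Matrix (Fin q) (Fin p) ℝ)
    (G2 : Matrix (Fin p) (Fin p) ℝ) (hG2 : G2.PosDef)
    (Γ2 : Matrix (Fin q) (Fin q) ℝ) (hΓ2 : Γ2.PosDef)
    (σ lam : ℝ) (hσ : 0 < σ) (hlam : lam = (σ ^ 2)⁻¹)
    (JGm Jm : Matrix (Fin p ⊕ Fin q) (Fin p ⊕ Fin q) ℝ)
    (hJGm : JGm = Matrix.fromBlocks (G2 + lam • (Amᵀ * Am)) (-lam • Amᵀ) (-lam • Am)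
      (Γ2 + ((σ ^ 2)⁻¹ + lam) • 1))
    (hJm : Jm = Matrix.fromBlocks (lam • (Amᵀ * Am)) (-lam • Amᵀ) (-lam • Am)
      (((σ ^ 2)⁻¹ + lam) • 1)) :
    (JGm⁻¹ * Jm).trace ≤
      2 * ((G2 + (σ ^ 2)⁻¹ • (Amᵀ * Am))⁻¹ * ((σ ^ 2)⁻¹ • (Amᵀ * Am))).trace +
        2 * ((((σ ^ 2)⁻¹ + lam)⁻¹ • Γ2 + 1)⁻¹).trace := by
  subst hlam
  set l : ℝ := (σ ^ 2)⁻¹ with hl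
  have hl0 : 0 < l := by positivity
  set B : Matrix (Fin p) (Fin p) ℝ := Amᵀ * Am with hBdef
  have hB : B.PosSemidef := by
    have := Matrix.posSemidef_conjTranspose_mul_self Am
    rwa [Matrix.conjTranspose_eq_transpose_of_trivial] at this
  have hlB : (l • B).PosSemidef := aux_smul_posSemidef hl0.le hB
  set F : Matrix (Fin p) (Fin p) ℝ := G2 + l • B with hFdef
  have hF : F.PosDef := hG2.add_posSemidef hlB
  set c : ℝ := l + l with hcdef
  have hc0 : 0 < c := by positivity
  set H : Matrix (Fin q) (Fin q) ℝ := Γ2 + c • 1 with hHdef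
  have hH : H.PosDef := hΓ2.add_posSemidef (aux_smul_posSemidef hc0.le .one)
  set D0 : Matrix (Fin p ⊕ Fin q) (Fin p ⊕ Fin q) ℝ := Matrix.fromBlocks G2 0 0 Γ2 with hD0def
  have hD0 : D0.PosDef := aux_fromBlocks_posDef hG2 hΓ2
  -- J is positive semidefinite
  set N : Matrix (Fin q) (Fin p ⊕ Fin q) ℝ := Matrix.fromCols Am (-1) with hNdef
  have hNN : Nᴴ * N = Matrix.fromBlocks (Amᵀ * Am) (-Amᵀ) (-Am) 1 := by
    rw [hNdef, Matrix.conjTranspose_fromCols_eq_fromRows_conjTranspose,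
      Matrix.fromRows_mul_fromCols, Matrix.conjTranspose_eq_transpose_of_trivial,
      Matrix.conjTranspose_eq_transpose_of_trivial]
    simp
  have hNpsd : (Nᴴ * N).PosSemidef := Matrix.posSemidef_conjTranspose_mul_self N
  have eJ : Jm = l • (Nᴴ * N) + Matrix.fromBlocks 0 0 0 (l • 1) := by
    rw [hJm, hNN, hcdef, hBdef, add_smul]
    simp only [Matrix.fromBlocks_smul, Matrix.fromBlocks_add, smul_neg, neg_smul,
      add_zero, zero_add]
  have hJpsd : Jm.PosSemidef := by
    rw [eJ]
    exact (aux_smul_posSemidef hl0.le hNpsd).add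
      (aux_fromBlocks_posSemidef .zero (aux_smul_posSemidef hl0.le .one))
  have eM : JGm = D0 + Jm := by
    rw [hJGm, hJm, hD0def, hFdef, hHdef, Matrix.fromBlocks_add]
    simp only [zero_add, add_zero]
  have hM : JGm.PosDef := eM ▸ hD0.add_posSemidef hJpsd
  -- invertibility facts
  have hMdet : IsUnit JGm.det := (Matrix.isUnit_iff_isUnit_det _).mp hM.isUnit
  have hMM : JGm⁻¹ * JGm = 1 := Matrix.nonsing_inv_mul _ hMdet
  have hMM' : JGm * JGm⁻¹ = 1 := Matrix.mul_nonsing_inv _ hMdet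
  have hFdet : IsUnit F.det := (Matrix.isUnit_iff_isUnit_det _).mp hF.isUnit
  have hFF : F⁻¹ * F = 1 := Matrix.nonsing_inv_mul _ hFdet
  have hFF' : F * F⁻¹ = 1 := Matrix.mul_nonsing_inv _ hFdet
  have hHdet : IsUnit H.det := (Matrix.isUnit_iff_isUnit_det _).mp hH.isUnit
  have hHH : H⁻¹ * H = 1 := Matrix.nonsing_inv_mul _ hHdet
  have hHH' : H * H⁻¹ = 1 := Matrix.mul_nonsing_inv _ hHdet
  have hMinvH : JGm⁻¹ᴴ = JGm⁻¹ := hM.inv.isHermitian.eq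
  -- the block-diagonal comparison matrix
  set T : Matrix (Fin p ⊕ Fin q) (Fin p ⊕ Fin q) ℝ := Matrix.fromBlocks F⁻¹ 0 0 H⁻¹ with hTdef
  have hTH : Tᴴ = T := by
    rw [hTdef, Matrix.fromBlocks_conjTranspose, hF.inv.isHermitian.eq, hH.inv.isHermitian.eq]
    simp
  set R : Matrix (Fin p ⊕ Fin q) (Fin p ⊕ Fin q) ℝ := (JGm⁻¹ - T)ᴴ * JGm * (JGm⁻¹ - T) with hRdef
  have hR : R.PosSemidef := hM.posSemidef.conjTranspose_mul_mul_same _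
  have eR : R = JGm⁻¹ - T - T + T * JGm * T := by
    rw [hRdef, Matrix.conjTranspose_sub, hMinvH, hTH, Matrix.sub_mul, hMM, Matrix.sub_mul,
      Matrix.one_mul, Matrix.mul_sub, Matrix.mul_assoc T JGm JGm⁻¹, hMM', Matrix.mul_one]
    abel
  have eInv : JGm⁻¹ = T + T - T * JGm * T + R := by rw [eR]; abel
  -- trace computations
  have tr1 : (T * D0).trace = (F⁻¹ * G2).trace + (H⁻¹ * Γ2).trace := by
    rw [hTdef, hD0def, Matrix.fromBlocks_multiply, aux_trace_fromBlocks]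
    simp
  have trTMT : (T * JGm * T * D0).trace = (F⁻¹ * G2).trace + (H⁻¹ * Γ2).trace := by
    rw [hJGm, hTdef, hD0def]
    simp only [Matrix.fromBlocks_multiply, Matrix.mul_zero, Matrix.zero_mul, add_zero, zero_add,
      hFF, hHH, Matrix.one_mul, Matrix.mul_one, aux_trace_fromBlocks]
  have trR : 0 ≤ (R * D0).trace := aux_trace_mul_nonneg hR hD0.posSemidef
  have key : (JGm⁻¹ * D0).trace =
      (T * D0).trace + (T * D0).trace - (T * JGm * T * D0).trace + (R * D0).trace := by
    rw [eInv]
    simp only [Matrix.add_mul, Matrix.sub_mul, Matrix.trace_add, Matrix.trace_sub]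
  have hMinvD0 : (F⁻¹ * G2).trace + (H⁻¹ * Γ2).trace ≤ (JGm⁻¹ * D0).trace := by
    rw [key, tr1, trTMT]; linarith
  -- left-hand side
  have eJm : Jm = JGm - D0 := by rw [eM]; abel
  have lhs_eq : (JGm⁻¹ * Jm).trace = (p + q : ℝ) - (JGm⁻¹ * D0).trace := by
    rw [eJm, Matrix.mul_sub, Matrix.trace_sub, hMM, Matrix.trace_one]
    simp
  -- right-hand side, first term
  have p_eq : ((p : ℝ)) = (F⁻¹ * G2).trace + (F⁻¹ * (l • B)).trace := by
    have : (F⁻¹ * F).trace = (F⁻¹ * G2).trace + (F⁻¹ * (l • B)).trace := by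
      rw [hFdef, Matrix.mul_add, Matrix.trace_add]
    rw [hFF, Matrix.trace_one] at this
    simpa using this
  have h1 : 0 ≤ (F⁻¹ * (l • B)).trace := aux_trace_mul_nonneg hF.inv.posSemidef hlB
  -- right-hand side, second term
  have e2 : c⁻¹ • Γ2 + 1 = c⁻¹ • H := by
    rw [hHdef, smul_add, smul_smul, inv_mul_cancel₀ hc0.ne', one_smul]
  have e3 : (c⁻¹ • H)⁻¹ = c • H⁻¹ := by
    apply Matrix.inv_eq_right_inv
    rw [Matrix.smul_mul, Matrix.mul_smul, smul_smul, inv_mul_cancel₀ hc0.ne', one_smul, hHH']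
  have t2 : ((c⁻¹ • Γ2 + 1)⁻¹).trace = c * H⁻¹.trace := by
    rw [e2, e3, Matrix.trace_smul, smul_eq_mul]
  have q_eq : ((q : ℝ)) = (H⁻¹ * Γ2).trace + c * H⁻¹.trace := by
    have : (H⁻¹ * H).trace = (H⁻¹ * Γ2).trace + c * H⁻¹.trace := by
      rw [hHdef, Matrix.mul_add, Matrix.trace_add, Matrix.mul_smul, Matrix.mul_one,
        Matrix.trace_smul, smul_eq_mul]
    rw [hHH, Matrix.trace_one] at this
    simpa using this
  have h2 : 0 ≤ c * H⁻¹.trace := mul_nonneg hc0.le (aux_trace_nonneg hH.inv.posSemidef)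
  rw [lhs_eq, t2]
  linarith

end Calming
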